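/- Let l ≥ 1 be an integer and let n satisfy binom(2l−1, l−1) < n ≤ binom(2l, l−1). Let S be a finite set with |S| = n. Then there exists a family of subsets of S of cardinality at most 2l + 1 that shatters every 2-element subset of S; i.e. C(2,n) ≤ 2l + 1. -/
import Mathlib


/-- If `l ≥ 1` and `binom(2l-1, l-1) < n ≤ binom(2l, l-1)` and `|S| = n`, then some
family of subsets of `S` of cardinality at most `2l + 1` shatters every 2-element
subset of `S`; i.e. `C(2,n) ≤ 2l + 1`. -/
theorem C_two_upper_improved {α : Type*} [Fintype α] [DecidableEq α] (l n : ℕ)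
    (hl : 1 ≤ l) (hn1 : (2 * l - 1).choose (l - 1) < n) (hn2 : n ≤ (2 * l).choose (l - 1))
    (hcard : Fintype.card α = n) :
    ∃ F : Finset (Finset α), F.card ≤ 2 * l + 1 ∧
      ∀ A : Finset α, A.card = 2 → F.Shatters A := by
  classical
  set P : Finset (Finset (Fin (2 * l))) :=
    Finset.powersetCard (l - 1) (Finset.univ : Finset (Fin (2 * l))) with hP
  have hcardP : Fintype.card {T // T ∈ P} = (2 * l).choose (l - 1) := by
    rw [Fintype.card_coe, hP, Finset.card_powersetCard, Finset.card_univ, Fintype.card_fin]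
  obtain ⟨e⟩ : Nonempty (α ↪ {T // T ∈ P}) := by
    rw [Function.Embedding.nonempty_iff_card_le, hcardP, hcard]
    exact hn2
  set g : α → Finset (Fin (2 * l)) := fun x => (e x : Finset (Fin (2 * l))) with hg
  have hg_inj : Function.Injective g := fun x y h => e.injective (Subtype.ext h)
  have hg_card : ∀ x, (g x).card = l - 1 := fun x => by
    have := (e x).2
    simp only [hP, Finset.mem_powersetCard] at this
    exact this.2
  set T : α → Finset (Option (Fin (2 * l))) :=
    fun x => insert none ((g x).image some) with hT
  have hT_none : ∀ x, none ∈ T x := fun x => Finset.mem_insert_self _ _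
  have hT_some : ∀ x j, some j ∈ T x ↔ j ∈ g x := by
    intro x j
    simp [hT]
  have hT_card : ∀ x, (T x).card ≤ l := by
    intro x
    calc (T x).card ≤ ((g x).image some).card + 1 := Finset.card_insert_le _ _
      _ ≤ (g x).card + 1 := by exact Nat.add_le_add_right (Finset.card_image_le) 1
      _ = l := by rw [hg_card]; omega
  refine ⟨Finset.image (fun i : Option (Fin (2 * l)) =>
      Finset.univ.filter (fun x => i ∈ T x)) Finset.univ, ?_, ?_⟩
  · calc _ ≤ (Finset.univ : Finset (Option (Fin (2 * l)))).card := Finset.card_image_le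
      _ = 2 * l + 1 := by simp
  intro A hA t ht
  obtain ⟨x, y, hxy, rfl⟩ := Finset.card_eq_two.mp hA
  have hmemE : ∀ i : Option (Fin (2 * l)),
      (Finset.univ.filter (fun x => i ∈ T x)) ∈ Finset.image (fun i : Option (Fin (2 * l)) =>
      Finset.univ.filter (fun x => i ∈ T x)) Finset.univ := by
    intro i
    exact Finset.mem_image_of_mem _ (Finset.mem_univ i)
  by_cases hx : x ∈ t <;> by_cases hy : y ∈ t
  · -- t = {x, y}
    have htxy : t = {x, y} := Finset.Subset.antisymm ht (by
      intro z hz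
      rcases Finset.mem_insert.mp hz with rfl | hz
      · exact hx
      · rwa [Finset.mem_singleton.mp hz])
    refine ⟨_, hmemE none, ?_⟩
    rw [htxy, Finset.inter_eq_left]
    intro z hz
    simp only [Finset.mem_filter, Finset.mem_univ, true_and]
    exact hT_none z
  · -- t = {x}
    have htx : t = {x} := by
      apply Finset.Subset.antisymm
      · intro z hz
        rcases Finset.mem_insert.mp (ht hz) with rfl | hz'
        · exact Finset.mem_singleton_self _
        · exact absurd (Finset.mem_singleton.mp hz' ▸ hz) hy
      · simpa using hx
    have hgxy : ¬ g x ⊆ g y := by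
      intro hsub
      exact hxy (hg_inj (Finset.eq_of_subset_of_card_le hsub (by rw [hg_card, hg_card])))
    obtain ⟨j, hjx, hjy⟩ := Finset.not_subset.mp hgxy
    refine ⟨_, hmemE (some j), ?_⟩
    rw [htx]
    ext z
    simp only [Finset.mem_inter, Finset.mem_insert, Finset.mem_singleton, Finset.mem_filter,
      Finset.mem_univ, true_and]
    constructor
    · rintro ⟨rfl | rfl, hz⟩
      · rfl
      · exact absurd ((hT_some z j).mp hz) hjy
    · rintro rfl
      exact ⟨Or.inl rfl, (hT_some z j).mpr hjx⟩
  · -- t = {y}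
    have hty : t = {y} := by
      apply Finset.Subset.antisymm
      · intro z hz
        rcases Finset.mem_insert.mp (ht hz) with rfl | hz'
        · exact absurd hz hx
        · exact hz'
      · simpa using hy
    have hgyx : ¬ g y ⊆ g x := by
      intro hsub
      exact hxy (hg_inj (Finset.eq_of_subset_of_card_le hsub (by rw [hg_card, hg_card]))).symm
    obtain ⟨j, hjy, hjx⟩ := Finset.not_subset.mp hgyx
    refine ⟨_, hmemE (some j), ?_⟩
    rw [hty]
    ext z
    simp only [Finset.mem_inter, Finset.mem_insert, Finset.mem_singleton, Finset.mem_filter,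
      Finset.mem_univ, true_and]
    constructor
    · rintro ⟨rfl | rfl, hz⟩
      · exact absurd ((hT_some z j).mp hz) hjx
      · rfl
    · rintro rfl
      exact ⟨Or.inr rfl, (hT_some z j).mpr hjy⟩
  · -- t = ∅
    have ht0 : t = ∅ := by
      rw [Finset.eq_empty_iff_forall_notMem]
      intro z hz
      rcases Finset.mem_insert.mp (ht hz) with rfl | hz'
      · exact hx hz
      · exact hy (Finset.mem_singleton.mp hz' ▸ hz)
    obtain ⟨i, hi⟩ : ∃ i, i ∉ T x ∪ T y := by
      by_contra hcon
      push_neg at hcon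
      have h : (T x ∪ T y) = Finset.univ := Finset.eq_univ_iff_forall.mpr hcon
      have h1 : (T x ∪ T y).card ≤ 2 * l := by
        calc (T x ∪ T y).card ≤ (T x).card + (T y).card := Finset.card_union_le _ _
          _ ≤ l + l := Nat.add_le_add (hT_card x) (hT_card y)
          _ = 2 * l := by ring
      rw [h, Finset.card_univ, Fintype.card_option, Fintype.card_fin] at h1
      omega
    refine ⟨_, hmemE i, ?_⟩
    rw [ht0, Finset.eq_empty_iff_forall_notMem]
    intro z hz
    obtain ⟨hz1, hz2⟩ := Finset.mem_inter.mp hz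
    simp only [Finset.mem_filter, Finset.mem_univ, true_and] at hz2
    rcases Finset.mem_insert.mp hz1 with rfl | hz'
    · exact hi (Finset.mem_union_left _ hz2)
    · rw [Finset.mem_singleton.mp hz'] at hz2
      exact hi (Finset.mem_union_right _ hz2)
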